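/- Let f : [a,b] → ℝ be C¹ with f' strictly monotone and let Γ = {(t, f(t)) : t ∈ [a,b]}, and for [a',b'] ⊆ [a,b] let Γ̃ = {(t, f(t)) : t ∈ [a',b']} with a' < b'. Then the interior of the difference set Γ − Γ̃ equals (Γ° − Γ̃°) \ {0}, where Γ° and Γ̃° denote the relative interiors (graphs over the open intervals). In particular, Γ − Γ̃ has nonempty interior. -/

import Mathlib

open Real MeasureTheory Set Filter Topology
open scoped Pointwise ENNReal

noncomputable section

instance : Fact (0 < Real.pi) := ⟨Real.pi_pos⟩

/-- Unoriented direction of a plane vector, as an element of ℝ/πℤ. -/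
def dir (v : ℝ × ℝ) : AddCircle Real.pi :=
  if v.1 = 0 then ((Real.pi / 2 : ℝ) : AddCircle Real.pi)
  else ((Real.arctan (v.2 / v.1) : ℝ) : AddCircle Real.pi)

/-- Euclidean length of a plane vector. -/
def elen (v : ℝ × ℝ) : ℝ := Real.sqrt (v.1 ^ 2 + v.2 ^ 2)

/-- Open Euclidean δ-neighborhood of a plane set. -/
def enbhd (δ : ℝ) (S : Set (ℝ × ℝ)) : Set (ℝ × ℝ) := {x | ∃ y ∈ S, elen (x - y) < δ}

/-- Membership in the closed arc `[θ₁, θ₂]` of ℝ/πℤ (standard orientation). -/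
def arcMemCC (θ₁ θ₂ θ : AddCircle Real.pi) : Prop :=
  ∃ t₁ t₂ t : ℝ, (t₁ : AddCircle Real.pi) = θ₁ ∧ (t₂ : AddCircle Real.pi) = θ₂ ∧
    (t : AddCircle Real.pi) = θ ∧ t₁ ≤ t ∧ t ≤ t₂ ∧ t₂ - t₁ < Real.pi

/-- Membership in the open arc `(θ₁, θ₂)` of ℝ/πℤ (standard orientation). -/
def arcMemOO (θ₁ θ₂ θ : AddCircle Real.pi) : Prop :=
  ∃ t₁ t₂ t : ℝ, (t₁ : AddCircle Real.pi) = θ₁ ∧ (t₂ : AddCircle Real.pi) = θ₂ ∧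
    (t : AddCircle Real.pi) = θ ∧ t₁ < t ∧ t < t₂ ∧ t₂ - t₁ < Real.pi

-- Auxiliary lemma: direction A (RHS ⊆ interior D)
theorem aux_memA (a b a' b' : ℝ) (ha'b' : a' < b')
    (hsub : Set.Icc a' b' ⊆ Set.Icc a b)
    (f f' : ℝ → ℝ)
    (hderiv : ∀ t ∈ Set.Icc a b, HasDerivAt f (f' t) t)
    (hcont : ContinuousOn f' (Set.Icc a b))
    (hmono : StrictMonoOn f' (Set.Icc a b) ∨ StrictAntiOn f' (Set.Icc a b))
    (t u : ℝ) (ht : t ∈ Set.Ioo a b) (hu : u ∈ Set.Ioo a' b') (htu : t ≠ u) :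
    ((fun t => (t, f t)) '' Set.Icc a b - (fun t => (t, f t)) '' Set.Icc a' b') ∈
      𝓝 ((t - u, f t - f u) : ℝ × ℝ) := by
  have haa' : a ≤ a' := (hsub ⟨le_refl a', ha'b'.le⟩).1
  have hb'b : b' ≤ b := (hsub ⟨ha'b'.le, le_refl b'⟩).2
  have huab : u ∈ Set.Ioo a b := ⟨lt_of_le_of_lt haa' hu.1, lt_of_lt_of_le hu.2 hb'b⟩
  have hstrict : ∀ x ∈ Set.Ioo a b, HasStrictDerivAt f (f' x) x := by
    intro x hx
    apply hasStrictDerivAt_of_hasDerivAt_of_continuousAt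
    · filter_upwards [isOpen_Ioo.mem_nhds hx] with y hy using hderiv y (Ioo_subset_Icc_self hy)
    · exact hcont.continuousAt (Filter.mem_of_superset (isOpen_Ioo.mem_nhds hx)
        Ioo_subset_Icc_self)
  set c := f' t with hc
  set d := f' u with hd
  have hcd : c ≠ d := by
    intro h
    rcases hmono with hm | hm
    · exact htu (hm.injOn (Ioo_subset_Icc_self ht) (Ioo_subset_Icc_self huab) h)
    · exact htu (hm.injOn (Ioo_subset_Icc_self ht) (Ioo_subset_Icc_self huab) h)
  have hcd' : c - d ≠ 0 := sub_ne_zero.mpr hcd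
  -- the derivative as a continuous linear map
  set F1 : (ℝ × ℝ) →L[ℝ] ℝ := ContinuousLinearMap.fst ℝ ℝ ℝ with hF1
  set F2 : (ℝ × ℝ) →L[ℝ] ℝ := ContinuousLinearMap.snd ℝ ℝ ℝ with hF2
  set L : (ℝ × ℝ) →L[ℝ] (ℝ × ℝ) := (F1 - F2).prod (c • F1 - d • F2) with hL
  set L' : (ℝ × ℝ) →L[ℝ] (ℝ × ℝ) :=
    ((c - d)⁻¹ • ((-d) • F1 + F2)).prod ((c - d)⁻¹ • ((-c) • F1 + F2)) with hL'
  have hleft : Function.LeftInverse L' L := by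
    rintro ⟨x, y⟩
    simp only [hL, hL', hF1, hF2, ContinuousLinearMap.prod_apply, ContinuousLinearMap.sub_apply,
      ContinuousLinearMap.add_apply, ContinuousLinearMap.smul_apply,
      ContinuousLinearMap.coe_fst', ContinuousLinearMap.coe_snd', smul_eq_mul]
    rw [Prod.mk.injEq]
    constructor <;> field_simp <;> ring
  have hright : Function.RightInverse L' L := by
    rintro ⟨x, y⟩
    simp only [hL, hL', hF1, hF2, ContinuousLinearMap.prod_apply, ContinuousLinearMap.sub_apply,
      ContinuousLinearMap.add_apply, ContinuousLinearMap.smul_apply,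
      ContinuousLinearMap.coe_fst', ContinuousLinearMap.coe_snd', smul_eq_mul]
    rw [Prod.mk.injEq]
    constructor <;> field_simp <;> ring
  set e : (ℝ × ℝ) ≃L[ℝ] (ℝ × ℝ) := ContinuousLinearEquiv.equivOfInverse L L' hleft hright with he
  set Φ : ℝ × ℝ → ℝ × ℝ := fun p => (p.1 - p.2, f p.1 - f p.2) with hΦ
  have hΦd : HasStrictFDerivAt Φ (e : (ℝ × ℝ) →L[ℝ] (ℝ × ℝ)) (t, u) := by
    have h1 : HasStrictFDerivAt (fun p : ℝ × ℝ => p.1 - p.2) (F1 - F2) (t, u) :=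
      F1.hasStrictFDerivAt.sub F2.hasStrictFDerivAt
    have h2a : HasStrictFDerivAt (fun p : ℝ × ℝ => f p.1) (c • F1) (t, u) :=
      HasStrictDerivAt.comp_hasStrictFDerivAt (t, u) (hstrict t ht) F1.hasStrictFDerivAt
    have h2b : HasStrictFDerivAt (fun p : ℝ × ℝ => f p.2) (d • F2) (t, u) :=
      HasStrictDerivAt.comp_hasStrictFDerivAt (t, u) (hstrict u huab) F2.hasStrictFDerivAt
    have h2 := h2a.sub h2b
    have := h1.prodMk h2
    have hcoe : (e : (ℝ × ℝ) →L[ℝ] (ℝ × ℝ)) = L := rfl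
    rw [hcoe]
    exact this
  have hmap := hΦd.map_nhds_eq_of_equiv
  have hΦtu : Φ (t, u) = (t - u, f t - f u) := rfl
  rw [← hΦtu, ← hmap, Filter.mem_map]
  apply Filter.mem_of_superset ((isOpen_Ioo.prod isOpen_Ioo).mem_nhds (⟨ht, hu⟩ :
    (t, u) ∈ Set.Ioo a b ×ˢ Set.Ioo a' b'))
  rintro ⟨x, y⟩ ⟨hx, hy⟩
  have := Set.sub_mem_sub (Set.mem_image_of_mem (fun t => (t, f t)) (Ioo_subset_Icc_self hx))
    (Set.mem_image_of_mem (fun t => (t, f t)) (Ioo_subset_Icc_self hy))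
  simpa [Set.mem_preimage, hΦ, Prod.mk_sub_mk] using this

theorem stmt7 (a b a' b' : ℝ) (ha'b' : a' < b')
    (hsub : Set.Icc a' b' ⊆ Set.Icc a b)
    (f f' : ℝ → ℝ)
    (hderiv : ∀ t ∈ Set.Icc a b, HasDerivAt f (f' t) t)
    (hcont : ContinuousOn f' (Set.Icc a b))
    (hmono : StrictMonoOn f' (Set.Icc a b) ∨ StrictAntiOn f' (Set.Icc a b)) :
    interior ((fun t => (t, f t)) '' Set.Icc a b - (fun t => (t, f t)) '' Set.Icc a' b') =
      ((fun t => (t, f t)) '' Set.Ioo a b - (fun t => (t, f t)) '' Set.Ioo a' b') \ {0} ∧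
    (interior
      ((fun t => (t, f t)) '' Set.Icc a b - (fun t => (t, f t)) '' Set.Icc a' b')).Nonempty := by
  have haa' : a ≤ a' := (hsub ⟨le_refl a', ha'b'.le⟩).1
  have hb'b : b' ≤ b := (hsub ⟨ha'b'.le, le_refl b'⟩).2
  set D : Set (ℝ × ℝ) :=
    (fun t => (t, f t)) '' Set.Icc a b - (fun t => (t, f t)) '' Set.Icc a' b' with hDdef
  have hmemD : ∀ p : ℝ × ℝ, p ∈ D ↔
      ∃ t u : ℝ, t ∈ Set.Icc a b ∧ u ∈ Set.Icc a' b' ∧ t - u = p.1 ∧ f t - f u = p.2 := by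
    intro p
    constructor
    · intro hp
      rcases Set.mem_sub.mp hp with ⟨x, hx, y, hy, hxy⟩
      rcases hx with ⟨t, ht, rfl⟩; rcases hy with ⟨u, hu, rfl⟩
      refine ⟨t, u, ht, hu, ?_, ?_⟩ <;> rw [← hxy] <;> rfl
    · rintro ⟨t, u, ht, hu, h1, h2⟩
      have h3 := Set.sub_mem_sub (Set.mem_image_of_mem (fun t => (t, f t)) ht)
        (Set.mem_image_of_mem (fun t => (t, f t)) hu)
      have h4 : ((t, f t) : ℝ × ℝ) - (u, f u) = p := by
        rw [Prod.mk_sub_mk, h1, h2]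
      rwa [h4] at h3
  constructor
  · ext p
    obtain ⟨s, v⟩ := p
    constructor
    · intro hp
      have hpD : (s, v) ∈ D := interior_subset hp
      obtain ⟨ε, hε, hball⟩ := Metric.isOpen_iff.mp isOpen_interior _ hp
      have hballD : Metric.ball ((s, v) : ℝ × ℝ) ε ⊆ D := fun q hq => interior_subset (hball hq)
      have hvert : ∀ δ : ℝ, |δ| < ε → ((s, v + δ) : ℝ × ℝ) ∈ D := by
        intro δ hδ
        apply hballD
        rw [Metric.mem_ball, Prod.dist_eq]
        simp only [Real.dist_eq, sub_self, abs_zero, add_sub_cancel_left]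
        exact max_lt hε hδ
      have hhor : ∀ δ : ℝ, |δ| < ε → ((s + δ, v) : ℝ × ℝ) ∈ D := by
        intro δ hδ
        apply hballD
        rw [Metric.mem_ball, Prod.dist_eq]
        simp only [Real.dist_eq, sub_self, abs_zero, add_sub_cancel_left]
        exact max_lt hδ hε
      have hε2 : |ε / 2| < ε := by rw [abs_of_pos (by linarith)]; linarith
      have hε2' : |-(ε / 2)| < ε := by rw [abs_neg]; exact hε2
      have hs0 : s ≠ 0 := by
        intro h0
        obtain ⟨t₁, u₁, ht₁, hu₁, hsu, hfu⟩ := (hmemD _).mp (hvert (ε / 2) hε2)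
        dsimp only at hsu hfu
        have htu1 : t₁ = u₁ := by linarith
        have hv2 : v + ε / 2 = 0 := by rw [← hfu, htu1]; ring
        obtain ⟨t₂, u₂, ht₂, hu₂, hsu₂, hfu₂⟩ := (hmemD _).mp hpD
        dsimp only at hsu₂ hfu₂
        have htu2 : t₂ = u₂ := by linarith
        have hv0 : v = 0 := by rw [← hfu₂, htu2]; ring
        linarith
      have hslt : s < b - a' := by
        obtain ⟨t₁, u₁, ht₁, hu₁, hsu, _⟩ := (hmemD _).mp (hhor (ε / 2) hε2)
        dsimp only at hsu
        linarith [ht₁.2, hu₁.1]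
      have hsgt : a - b' < s := by
        obtain ⟨t₁, u₁, ht₁, hu₁, hsu, _⟩ := (hmemD _).mp (hhor (-(ε / 2)) hε2')
        dsimp only at hsu
        linarith [ht₁.1, hu₁.2]
      set α := max (a - s) a' with hα
      set β := min (b - s) b' with hβ
      have hαa' : a' ≤ α := le_max_right _ _
      have hαa : a - s ≤ α := le_max_left _ _
      have hβb' : β ≤ b' := min_le_right _ _
      have hβb : β ≤ b - s := min_le_left _ _
      have hαβ : α < β :=
        max_lt (lt_min (by linarith) (by linarith)) (lt_min (by linarith) ha'b')
      set g : ℝ → ℝ := fun u => f (u + s) - f u with hg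
      have hmem1 : ∀ u ∈ Set.Icc α β, u + s ∈ Set.Icc a b := by
        intro u hu
        exact ⟨by linarith [hu.1], by linarith [hu.2]⟩
      have hmem2 : ∀ u ∈ Set.Icc α β, u ∈ Set.Icc a b := fun u hu =>
        hsub ⟨by linarith [hu.1], by linarith [hu.2]⟩
      have hgc : ContinuousOn g (Set.Icc α β) := by
        intro u hu
        have hin : ContinuousAt (fun u : ℝ => u + s) u :=
          (continuous_id.add continuous_const).continuousAt
        have h1 : ContinuousAt (fun u : ℝ => f (u + s)) u :=
          ContinuousAt.comp (f := fun u : ℝ => u + s)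
            ((hderiv _ (hmem1 u hu)).continuousAt) hin
        exact ((h1.sub (hderiv _ (hmem2 u hu)).continuousAt)).continuousWithinAt
      have hgderiv : ∀ u ∈ Set.Ioo α β, HasDerivAt g (f' (u + s) - f' u) u := by
        intro u hu
        have hu' : u ∈ Set.Icc α β := Set.Ioo_subset_Icc_self hu
        have h1 : HasDerivAt (fun u : ℝ => f (u + s)) (f' (u + s)) u := by
          have := (hderiv _ (hmem1 u hu')).comp u ((hasDerivAt_id u).add_const s)
          rw [mul_one] at this; exact this
        exact h1.sub (hderiv _ (hmem2 u hu'))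
      have key : MonotoneOn g (Set.Icc α β) ∨ AntitoneOn g (Set.Icc α β) := by
        rcases hs0.lt_or_gt with hneg | hpos <;> rcases hmono with hm | hm
        · right
          refine (strictAntiOn_of_deriv_neg (convex_Icc α β) hgc ?_).antitoneOn
          intro u hu; rw [interior_Icc] at hu
          rw [(hgderiv u hu).deriv]
          have := hm (hmem1 u (Set.Ioo_subset_Icc_self hu)) (hmem2 u (Set.Ioo_subset_Icc_self hu))
            (by linarith)
          linarith
        · left
          refine (strictMonoOn_of_deriv_pos (convex_Icc α β) hgc ?_).monotoneOn
          intro u hu; rw [interior_Icc] at hu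
          rw [(hgderiv u hu).deriv]
          have := hm (hmem1 u (Set.Ioo_subset_Icc_self hu)) (hmem2 u (Set.Ioo_subset_Icc_self hu))
            (by linarith)
          linarith
        · left
          refine (strictMonoOn_of_deriv_pos (convex_Icc α β) hgc ?_).monotoneOn
          intro u hu; rw [interior_Icc] at hu
          rw [(hgderiv u hu).deriv]
          have := hm (hmem2 u (Set.Ioo_subset_Icc_self hu)) (hmem1 u (Set.Ioo_subset_Icc_self hu))
            (by linarith)
          linarith
        · right
          refine (strictAntiOn_of_deriv_neg (convex_Icc α β) hgc ?_).antitoneOn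
          intro u hu; rw [interior_Icc] at hu
          rw [(hgderiv u hu).deriv]
          have := hm (hmem2 u (Set.Ioo_subset_Icc_self hu)) (hmem1 u (Set.Ioo_subset_Icc_self hu))
            (by linarith)
          linarith
      have hrep : ∀ w : ℝ, ((s, w) : ℝ × ℝ) ∈ D → ∃ u ∈ Set.Icc α β, g u = w := by
        intro w hw
        obtain ⟨t₁, u₁, ht₁, hu₁, h1, h2⟩ := (hmemD _).mp hw
        dsimp only at h1 h2
        refine ⟨u₁, ⟨max_le (by linarith [ht₁.1]) hu₁.1, le_min (by linarith [ht₁.2]) hu₁.2⟩, ?_⟩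
        have ht1 : u₁ + s = t₁ := by linarith
        show f (u₁ + s) - f u₁ = w
        rw [ht1]; exact h2
      obtain ⟨u₁, hu₁, hgu₁⟩ := hrep (v - ε / 2) (by
        have := hvert (-(ε / 2)) hε2'
        have he : v + -(ε / 2) = v - ε / 2 := by ring
        rwa [he] at this)
      obtain ⟨u₂, hu₂, hgu₂⟩ := hrep (v + ε / 2) (hvert (ε / 2) hε2)
      have hsubuIcc : Set.uIcc u₁ u₂ ⊆ Set.Icc α β := Set.uIcc_subset_Icc hu₁ hu₂
      have hivt := intermediate_value_uIcc (hgc.mono hsubuIcc)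
      have hvmem : v ∈ Set.uIcc (g u₁) (g u₂) := by
        rw [hgu₁, hgu₂]
        exact Set.mem_uIcc.mpr (Or.inl ⟨by linarith, by linarith⟩)
      obtain ⟨u₃, hu₃, hgu₃⟩ := hivt hvmem
      have hu₃' : u₃ ∈ Set.Icc α β := hsubuIcc hu₃
      have hne1 : u₃ ≠ α := by
        intro h
        rcases key with hk | hk
        · have h1 : g α ≤ g u₁ := hk (Set.left_mem_Icc.mpr hαβ.le) hu₁ hu₁.1
          rw [← h, hgu₃, hgu₁] at h1; linarith
        · have h1 : g u₂ ≤ g α := hk (Set.left_mem_Icc.mpr hαβ.le) hu₂ hu₂.1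
          rw [← h, hgu₃, hgu₂] at h1; linarith
      have hne2 : u₃ ≠ β := by
        intro h
        rcases key with hk | hk
        · have h1 : g u₂ ≤ g β := hk hu₂ (Set.right_mem_Icc.mpr hαβ.le) hu₂.2
          rw [← h, hgu₃, hgu₂] at h1; linarith
        · have h1 : g β ≤ g u₁ := hk hu₁ (Set.right_mem_Icc.mpr hαβ.le) hu₁.2
          rw [← h, hgu₃, hgu₁] at h1; linarith
      have hu₃Ioo : u₃ ∈ Set.Ioo α β :=
        ⟨hu₃'.1.lt_of_ne (Ne.symm hne1), hu₃'.2.lt_of_ne hne2⟩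
      constructor
      · have hp' : ((s, v) : ℝ × ℝ) = (u₃ + s, f (u₃ + s)) - (u₃, f u₃) := by
          rw [Prod.mk_sub_mk]
          have h1 : u₃ + s - u₃ = s := by ring
          have h2 : f (u₃ + s) - f u₃ = v := hgu₃
          rw [h1, h2]
        rw [hp']
        exact Set.sub_mem_sub
          (Set.mem_image_of_mem _ ⟨by linarith [hu₃Ioo.1], by linarith [hu₃Ioo.2]⟩)
          (Set.mem_image_of_mem _ ⟨lt_of_le_of_lt hαa' hu₃Ioo.1, lt_of_lt_of_le hu₃Ioo.2 hβb'⟩)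
      · simp only [Set.mem_singleton_iff]
        intro h
        exact hs0 (by rw [Prod.ext_iff] at h; exact h.1)
    · rintro ⟨hpmem, hp0⟩
      rcases Set.mem_sub.mp hpmem with ⟨x, hx, y, hy, hxy⟩
      rcases hx with ⟨t, ht, rfl⟩; rcases hy with ⟨u, hu, rfl⟩
      have htu : t ≠ u := by
        intro h
        apply hp0
        subst h
        simp only [Set.mem_singleton_iff, ← hxy, sub_self]
      rw [mem_interior_iff_mem_nhds]
      have := aux_memA a b a' b' ha'b' hsub f f' hderiv hcont hmono t u ht hu htu
      rwa [show ((t - u, f t - f u) : ℝ × ℝ) = (s, v) from by rw [← hxy, Prod.mk_sub_mk]] at this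
  · have h1 : (3 * a' + b') / 4 ∈ Set.Ioo a b :=
      ⟨by linarith, by linarith⟩
    have h2 : (a' + b') / 2 ∈ Set.Ioo a' b' := ⟨by linarith, by linarith⟩
    have hne : (3 * a' + b') / 4 ≠ (a' + b') / 2 := by intro h; linarith [h]
    have := aux_memA a b a' b' ha'b' hsub f f' hderiv hcont hmono _ _ h1 h2 hne
    exact ⟨_, mem_interior_iff_mem_nhds.mpr this⟩
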